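/- arXiv:1310.3353 — 2 statements merged into one kernel-verified Lean document; each statement's English description precedes it below -/
import Mathlib

section
/- The dynamic programming recurrence for optimal consecutive clustering is correct: defining opt'(j,i) as the minimum cost of a partition of vertices 0..j into consecutive intervals whose last part is {j-i,...,j}, it satisfies opt'(j,0) = opt(j-1) + Σ_{k=0}^{j-1} w⁺(j,k) and opt'(j,i) = opt'(j-1,i-1) + Σ_{k=0}^{j-1} w⁺(j,k) - Σ_{k=j-i}^{j-1} w⁺(j,k) + Σ_{k=j-i}^{j-1} w⁻(j,k) for 0 < i ≤ j, where opt(j) = min_{0 ≤ i ≤ j} opt'(j,i). -/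
open Finset

def samePartN {s : Finset ℕ} (P : Finpartition s) (a b : ℕ) : Prop :=
  ∃ t ∈ P.parts, a ∈ t ∧ b ∈ t

instance {s : Finset ℕ} (P : Finpartition s) (a b : ℕ) : Decidable (samePartN P a b) := by
  unfold samePartN; infer_instance

/-- A partition into sets of consecutive integers. -/
def IsConsecPartition {s : Finset ℕ} (P : Finpartition s) : Prop :=
  ∀ t ∈ P.parts, ∀ a ∈ t, ∀ b ∈ t, ∀ c, a ≤ c → c ≤ b → c ∈ t

/-- Weighted editing cost of a partition: `w⁻` for same-part pairs, `w⁺` for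
cross-part pairs. -/
noncomputable def pcost (w : ℕ → ℕ → ℝ) (s : Finset ℕ) (P : Finpartition s) : ℝ :=
  ∑ b ∈ s, ∑ a ∈ s.filter (· < b),
    if samePartN P a b then max (-w a b) 0 else max (w a b) 0

/-- `opt' w j i`: minimum cost of a consecutive partition of `{0,…,j}` whose last
part is `{j-i,…,j}`. -/
noncomputable def opt' (w : ℕ → ℕ → ℝ) (j i : ℕ) : ℝ :=
  sInf ((fun P => pcost w (Finset.range (j + 1)) P) ''
    {P | IsConsecPartition P ∧ Finset.Icc (j - i) j ∈ P.parts})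

/-- `opt w j`: minimum cost of a consecutive partition of `{0,…,j}`. -/
noncomputable def opt (w : ℕ → ℕ → ℝ) (j : ℕ) : ℝ :=
  sInf ((fun P => pcost w (Finset.range (j + 1)) P) '' {P | IsConsecPartition P})

/-! ### Auxiliary constructions -/

/-- Remove the part `Icc m n` from a partition of `range (n+1)`. -/
noncomputable def shrinkI (m n : ℕ) (h : m ≤ n) (P : Finpartition (range (n + 1))) :
    Finpartition (range m) :=
  (P.avoid (Finset.Icc m n)).copy
    (by ext x; simp only [mem_sdiff, mem_range, Finset.mem_Icc]; omega)

/-- Add the part `Icc m n` to a partition of `range m`, obtaining a partition of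
`range (n+1)`. -/
noncomputable def extTop (m n : ℕ) (h : m ≤ n) (R : Finpartition (range m)) :
    Finpartition (range (n + 1)) :=
  R.extend (b := Finset.Icc m n)
    (by simpa [Finset.bot_eq_empty, ← Finset.nonempty_iff_ne_empty] using Finset.nonempty_Icc.2 h)
    (by rw [Finset.disjoint_left]; intro x hx hx'
        simp only [mem_range] at hx; simp only [Finset.mem_Icc] at hx'; omega)
    (by ext x; simp only [Finset.sup_eq_union, Finset.mem_union, mem_range, Finset.mem_Icc]; omega)

lemma extTop_parts {m n : ℕ} (h : m ≤ n) (R : Finpartition (range m)) :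
    (extTop m n h R).parts = insert (Finset.Icc m n) R.parts := rfl

lemma shrinkI_parts {m n : ℕ} (h : m ≤ n) {P : Finpartition (range (n + 1))}
    (hP : Finset.Icc m n ∈ P.parts) :
    (shrinkI m n h P).parts = P.parts.erase (Finset.Icc m n) := by
  ext c
  simp only [shrinkI, Finpartition.copy_parts, Finpartition.mem_avoid, Finset.mem_erase]
  constructor
  · rintro ⟨d, hd, hdb, rfl⟩
    have hne : d ≠ Finset.Icc m n := fun h' => hdb (h' ▸ le_rfl)
    have hdisj : Disjoint d (Finset.Icc m n) := P.disjoint hd hP hne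
    rw [sdiff_eq_self_of_disjoint hdisj]
    exact ⟨hne, hd⟩
  · rintro ⟨hne, hc⟩
    have hdisj : Disjoint c (Finset.Icc m n) := P.disjoint hc hP hne
    refine ⟨c, hc, fun hle => P.bot_notMem ?_, sdiff_eq_self_of_disjoint hdisj⟩
    rwa [← hdisj.eq_bot_of_le hle]

/-- The singletons partition of `range m`, our canonical consecutive partition. -/
noncomputable def singletons : (m : ℕ) → Finpartition (range m)
  | 0 => (Finpartition.empty (Finset ℕ)).copy (by simp)
  | (m + 1) => extTop m m le_rfl (singletons m)

lemma consec_extTop {m n : ℕ} (h : m ≤ n) {R : Finpartition (range m)}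
    (hR : IsConsecPartition R) : IsConsecPartition (extTop m n h R) := by
  intro t ht a ha b hb c h1 h2
  rw [extTop_parts, Finset.mem_insert] at ht
  rcases ht with rfl | ht
  · simp only [Finset.mem_Icc] at ha hb ⊢; omega
  · exact hR t ht a ha b hb c h1 h2

lemma consec_singletons : ∀ m, IsConsecPartition (singletons m)
  | 0 => by
    intro t ht
    exfalso
    have hle := (singletons 0).le ht
    simp only [Finset.range_zero, Finset.le_eq_subset, Finset.subset_empty] at hle
    apply (singletons 0).bot_notMem
    rw [Finset.bot_eq_empty, ← hle]
    exact ht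
  | (m + 1) => consec_extTop le_rfl (consec_singletons m)

lemma consec_copy {s t : Finset ℕ} {P : Finpartition s} (h : s = t) :
    IsConsecPartition P → IsConsecPartition (P.copy h) := fun hc => hc

/-! ### Basic facts about `pcost` -/

lemma pcost_nonneg (w : ℕ → ℕ → ℝ) (s : Finset ℕ) (P : Finpartition s) : 0 ≤ pcost w s P :=
  Finset.sum_nonneg fun _ _ => Finset.sum_nonneg fun _ _ => by
    split_ifs <;> exact le_max_right _ _

lemma bddBelow_pcost (w : ℕ → ℕ → ℝ) (s : Finset ℕ) (A : Set (Finpartition s)) :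
    BddBelow ((fun P => pcost w s P) '' A) :=
  ⟨0, by rintro x ⟨P, _, rfl⟩; exact pcost_nonneg w s P⟩

lemma sInf_add_const {S : Set ℝ} (hne : S.Nonempty) (hbd : BddBelow S) (c : ℝ) :
    sInf ((fun x => x + c) '' S) = sInf S + c :=
  (Monotone.map_csInf_of_continuousAt (f := fun x => x + c) (by fun_prop)
    (fun a b h => show a + c ≤ b + c by linarith) hne hbd).symm

lemma filter_lt_range (n b : ℕ) (h : b ≤ n) : (range n).filter (· < b) = range b := by
  ext x; simp only [mem_filter, mem_range]; omega

lemma pcost_succ (w : ℕ → ℕ → ℝ) {j : ℕ} (P : Finpartition (range (j + 1)))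
    (Q : Finpartition (range j))
    (h : ∀ a b, a < j → b < j → (samePartN P a b ↔ samePartN Q a b)) :
    pcost w (range (j + 1)) P = pcost w (range j) Q
      + ∑ k ∈ range j, (if samePartN P k j then max (-w k j) 0 else max (w k j) 0) := by
  unfold pcost
  rw [Finset.sum_range_succ, filter_lt_range (j + 1) j (by omega)]
  congr 1
  apply Finset.sum_congr rfl
  intro b hb
  rw [mem_range] at hb
  rw [filter_lt_range (j + 1) b (by omega), filter_lt_range j b (by omega)]
  apply Finset.sum_congr rfl
  intro a ha
  rw [mem_range] at ha
  exact if_congr (h a b (by omega) hb) rfl rfl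

/-! ### The main relation between partitions of `range (j+1)` and `range j` -/

lemma main_rel {m j : ℕ} (hmj : m ≤ j)
    {P : Finpartition (range (j + 1))} (hP : Finset.Icc m j ∈ P.parts)
    {Q : Finpartition (range j)}
    (hrel : P.parts.erase (Finset.Icc m j) = Q.parts.erase (Finset.Icc m (j - 1))) :
    (∀ a b, a < j → b < j → (samePartN P a b ↔ samePartN Q a b)) ∧
    (∀ k, k < j → (samePartN P k j ↔ m ≤ k)) ∧
    (IsConsecPartition P → IsConsecPartition Q) ∧
    (IsConsecPartition Q → IsConsecPartition P) := by
  have hQsub : ∀ u ∈ Q.parts, u ≠ Finset.Icc m (j - 1) →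
      u ∈ P.parts ∧ u ≠ Finset.Icc m j := by
    intro u hu hne
    have h' : u ∈ Q.parts.erase (Finset.Icc m (j - 1)) := Finset.mem_erase.2 ⟨hne, hu⟩
    rw [← hrel] at h'
    exact ⟨Finset.mem_of_mem_erase h', (Finset.mem_erase.1 h').1⟩
  have hPsub : ∀ t ∈ P.parts, t ≠ Finset.Icc m j → t ∈ Q.parts := by
    intro t ht hne
    have h' : t ∈ P.parts.erase (Finset.Icc m j) := Finset.mem_erase.2 ⟨hne, ht⟩
    rw [hrel] at h'
    exact Finset.mem_of_mem_erase h'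
  have hmem : ∀ a, m ≤ a → a < j →
      Finset.Icc m (j - 1) ∈ Q.parts ∧ a ∈ Finset.Icc m (j - 1) := by
    intro a ham haj
    obtain ⟨u, hu, hau⟩ := Q.exists_mem (mem_range.2 haj)
    have hu' : u = Finset.Icc m (j - 1) := by
      by_contra hne
      obtain ⟨huP, huneq⟩ := hQsub u hu hne
      exact Finset.disjoint_left.1 (P.disjoint huP hP huneq) hau
        (Finset.mem_Icc.2 ⟨ham, by omega⟩)
    subst hu'
    exact ⟨hu, hau⟩
  refine ⟨?_, ?_, ?_, ?_⟩
  · intro a b ha hb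
    constructor
    · rintro ⟨t, ht, hat, hbt⟩
      by_cases hte : t = Finset.Icc m j
      · subst hte
        rw [Finset.mem_Icc] at hat hbt
        obtain ⟨h1, h2⟩ := hmem a hat.1 ha
        obtain ⟨_, h3⟩ := hmem b hbt.1 hb
        exact ⟨_, h1, h2, h3⟩
      · exact ⟨t, hPsub t ht hte, hat, hbt⟩
    · rintro ⟨u, hu, hau, hbu⟩
      by_cases hue : u = Finset.Icc m (j - 1)
      · subst hue
        rw [Finset.mem_Icc] at hau hbu
        exact ⟨_, hP, Finset.mem_Icc.2 ⟨hau.1, by omega⟩, Finset.mem_Icc.2 ⟨hbu.1, by omega⟩⟩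
      · exact ⟨u, (hQsub u hu hue).1, hau, hbu⟩
  · intro k hk
    constructor
    · rintro ⟨t, ht, hkt, hjt⟩
      have hte : t = Finset.Icc m j :=
        P.eq_of_mem_parts ht hP hjt (Finset.mem_Icc.2 ⟨hmj, le_rfl⟩)
      subst hte
      exact (Finset.mem_Icc.1 hkt).1
    · intro hmk
      exact ⟨_, hP, Finset.mem_Icc.2 ⟨hmk, by omega⟩, Finset.mem_Icc.2 ⟨hmj, le_rfl⟩⟩
  · intro hPc u hu a ha b hb c h1 h2
    by_cases hue : u = Finset.Icc m (j - 1)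
    · subst hue; simp only [Finset.mem_Icc] at ha hb ⊢; omega
    · exact hPc u (hQsub u hu hue).1 a ha b hb c h1 h2
  · intro hQc t ht a ha b hb c h1 h2
    by_cases hte : t = Finset.Icc m j
    · subst hte; simp only [Finset.mem_Icc] at ha hb ⊢; omega
    · exact hQc t (hPsub t ht hte) a ha b hb c h1 h2

lemma pcost_rel (w : ℕ → ℕ → ℝ) {m j : ℕ} (hmj : m ≤ j)
    {P : Finpartition (range (j + 1))} (hP : Finset.Icc m j ∈ P.parts)
    {Q : Finpartition (range j)}
    (hrel : P.parts.erase (Finset.Icc m j) = Q.parts.erase (Finset.Icc m (j - 1))) :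
    pcost w (range (j + 1)) P = pcost w (range j) Q
      + ∑ k ∈ range j, (if m ≤ k then max (-w k j) 0 else max (w k j) 0) := by
  obtain ⟨h1, h2, _, _⟩ := main_rel hmj hP hrel
  rw [pcost_succ w P Q h1]
  congr 1
  apply Finset.sum_congr rfl
  intro k hk
  rw [mem_range] at hk
  exact if_congr (h2 k hk) rfl rfl

lemma parts_subset_range {j : ℕ} {P : Finpartition (range j)} {t : Finset ℕ}
    (ht : t ∈ P.parts) : t ⊆ range j := P.le ht

/-! ### Set equalities -/

lemma setA (w : ℕ → ℕ → ℝ) {j : ℕ} (hj : 1 ≤ j) :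
    ((fun P => pcost w (range (j + 1)) P) ''
      {P | IsConsecPartition P ∧ Finset.Icc j j ∈ P.parts})
    = (fun x => x + ∑ k ∈ range j, (if j ≤ k then max (-w k j) 0 else max (w k j) 0)) ''
      ((fun Q => pcost w (range j) Q) ''
        {Q : Finpartition (range j) | IsConsecPartition Q}) := by
  rw [Set.image_image]
  ext x
  simp only [Set.mem_image, Set.mem_setOf_eq]
  constructor
  · rintro ⟨P, ⟨hPc, hP⟩, rfl⟩
    have hIccEmpty : Finset.Icc j (j - 1) = (∅ : Finset ℕ) :=
      Finset.Icc_eq_empty (by omega)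
    have hbot : (∅ : Finset ℕ) ∉ (shrinkI j j le_rfl P).parts := by
      simpa [Finset.bot_eq_empty] using (shrinkI j j le_rfl P).bot_notMem
    have hrel : P.parts.erase (Finset.Icc j j)
        = (shrinkI j j le_rfl P).parts.erase (Finset.Icc j (j - 1)) := by
      rw [hIccEmpty, Finset.erase_eq_of_notMem hbot, shrinkI_parts le_rfl hP]
    exact ⟨shrinkI j j le_rfl P, (main_rel le_rfl hP hrel).2.2.1 hPc,
      (pcost_rel w le_rfl hP hrel).symm⟩
  · rintro ⟨Q, hQc, rfl⟩
    set P := extTop j j le_rfl Q with hPdef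
    have hP : Finset.Icc j j ∈ P.parts := by
      rw [extTop_parts]; exact Finset.mem_insert_self _ _
    have hIccnot : Finset.Icc j j ∉ Q.parts := by
      intro h
      have h2 := parts_subset_range h (Finset.mem_Icc.2 ⟨le_rfl, le_rfl⟩)
      simp only [mem_range] at h2
      omega
    have hIccEmpty : Finset.Icc j (j - 1) = (∅ : Finset ℕ) :=
      Finset.Icc_eq_empty (by omega)
    have hbotQ : (∅ : Finset ℕ) ∉ Q.parts := by
      simpa [Finset.bot_eq_empty] using Q.bot_notMem
    have hrel : P.parts.erase (Finset.Icc j j) = Q.parts.erase (Finset.Icc j (j - 1)) := by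
      rw [extTop_parts, Finset.erase_insert hIccnot, hIccEmpty,
        Finset.erase_eq_of_notMem hbotQ]
    exact ⟨P, ⟨(main_rel le_rfl hP hrel).2.2.2 hQc, hP⟩, pcost_rel w le_rfl hP hrel⟩

lemma setB (w : ℕ → ℕ → ℝ) {m j : ℕ} (hmj : m < j) :
    ((fun P => pcost w (range (j + 1)) P) ''
      {P | IsConsecPartition P ∧ Finset.Icc m j ∈ P.parts})
    = (fun x => x + ∑ k ∈ range j, (if m ≤ k then max (-w k j) 0 else max (w k j) 0)) ''
      ((fun Q => pcost w (range j) Q) ''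
        {Q : Finpartition (range j) | IsConsecPartition Q ∧ Finset.Icc m (j - 1) ∈ Q.parts}) := by
  have hj : 1 ≤ j := by omega
  have hcast : range j = range (j - 1 + 1) := by rw [Nat.sub_add_cancel hj]
  rw [Set.image_image]
  ext x
  simp only [Set.mem_image, Set.mem_setOf_eq]
  constructor
  · rintro ⟨P, ⟨hPc, hP⟩, rfl⟩
    set Q := (extTop m (j - 1) (by omega) (shrinkI m j (le_of_lt hmj) P)).copy hcast.symm with hQdef
    have hQparts : Q.parts = insert (Finset.Icc m (j - 1)) (P.parts.erase (Finset.Icc m j)) := by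
      rw [hQdef, Finpartition.copy_parts, extTop_parts, shrinkI_parts (le_of_lt hmj) hP]
    have hQ : Finset.Icc m (j - 1) ∈ Q.parts := by
      rw [hQparts]; exact Finset.mem_insert_self _ _
    have hnotmem : Finset.Icc m (j - 1) ∉ P.parts.erase (Finset.Icc m j) := by
      intro hmem
      have htP := Finset.mem_of_mem_erase hmem
      have hneq := (Finset.mem_erase.1 hmem).1
      have hmmem : m ∈ Finset.Icc m (j - 1) := Finset.mem_Icc.2 ⟨le_rfl, by omega⟩
      have hmIcc : m ∈ Finset.Icc m j := Finset.mem_Icc.2 ⟨le_rfl, by omega⟩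
      exact Finset.disjoint_left.1 (P.disjoint htP hP hneq) hmmem hmIcc
    have hrel : P.parts.erase (Finset.Icc m j) = Q.parts.erase (Finset.Icc m (j - 1)) := by
      rw [hQparts, Finset.erase_insert hnotmem]
    exact ⟨Q, ⟨(main_rel (le_of_lt hmj) hP hrel).2.2.1 hPc, hQ⟩,
      (pcost_rel w (le_of_lt hmj) hP hrel).symm⟩
  · rintro ⟨Q, ⟨hQc, hQ⟩, rfl⟩
    have hQ' : Finset.Icc m (j - 1) ∈ (Q.copy hcast).parts := hQ
    set P := extTop m j (le_of_lt hmj) (shrinkI m (j - 1) (by omega) (Q.copy hcast)) with hPdef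
    have hPparts : P.parts = insert (Finset.Icc m j) (Q.parts.erase (Finset.Icc m (j - 1))) := by
      rw [hPdef, extTop_parts, shrinkI_parts (by omega) hQ', Finpartition.copy_parts]
    have hP : Finset.Icc m j ∈ P.parts := by
      rw [hPparts]; exact Finset.mem_insert_self _ _
    have hnotmem : Finset.Icc m j ∉ Q.parts.erase (Finset.Icc m (j - 1)) := by
      intro hmem
      have := parts_subset_range (Finset.mem_of_mem_erase hmem)
        (Finset.mem_Icc.2 ⟨le_of_lt hmj, le_rfl⟩)
      simp only [mem_range] at this; omega
    have hrel : P.parts.erase (Finset.Icc m j) = Q.parts.erase (Finset.Icc m (j - 1)) := by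
      rw [hPparts, Finset.erase_insert hnotmem]
    exact ⟨P, ⟨(main_rel (le_of_lt hmj) hP hrel).2.2.2 hQc, hP⟩,
      pcost_rel w (le_of_lt hmj) hP hrel⟩

/-! ### Nonemptiness of the optimization sets -/

lemma nonempty_consec {j : ℕ} :
    {Q : Finpartition (range j) | IsConsecPartition Q}.Nonempty :=
  ⟨singletons j, consec_singletons j⟩

lemma nonempty_consec_with {m j : ℕ} (hmj : m ≤ j) :
    {P : Finpartition (range (j + 1)) |
        IsConsecPartition P ∧ Finset.Icc m j ∈ P.parts}.Nonempty := by
  refine ⟨extTop m j hmj (singletons m), consec_extTop hmj (consec_singletons m), ?_⟩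
  rw [extTop_parts]; exact Finset.mem_insert_self _ _

lemma nonempty_consec_with' {m j : ℕ} (hmj : m < j) :
    {Q : Finpartition (range j) |
        IsConsecPartition Q ∧ Finset.Icc m (j - 1) ∈ Q.parts}.Nonempty := by
  have hcast : range (j - 1 + 1) = range j := by rw [Nat.sub_add_cancel (by omega : 1 ≤ j)]
  refine ⟨(extTop m (j - 1) (by omega) (singletons m)).copy hcast,
    consec_copy hcast (consec_extTop (by omega) (consec_singletons m)), ?_⟩
  rw [Finpartition.copy_parts, extTop_parts]
  exact Finset.mem_insert_self _ _

/-! ### Sum rearrangement -/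

lemma sum_split (w : ℕ → ℕ → ℝ) (hw : ∀ a b, w a b = w b a) {m j : ℕ} (hmj : m ≤ j) :
    ∑ k ∈ range j, (if m ≤ k then max (-w k j) 0 else max (w k j) 0)
    = ∑ k ∈ range j, max (w j k) 0 - ∑ k ∈ Finset.Ico m j, max (w j k) 0
      + ∑ k ∈ Finset.Ico m j, max (-w j k) 0 := by
  have hsym : ∀ k, w k j = w j k := fun k => hw k j
  rw [Finset.sum_ite]
  have hf1 : (range j).filter (fun k => m ≤ k) = Finset.Ico m j := by
    ext k; simp only [mem_filter, mem_range, Finset.mem_Ico]; omega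
  have hf2 : (range j).filter (fun k => ¬ m ≤ k) = range m := by
    ext k; simp only [mem_filter, mem_range]; omega
  rw [hf1, hf2]
  have hsplit : ∑ k ∈ range j, max (w j k) 0
      = ∑ k ∈ range m, max (w j k) 0 + ∑ k ∈ Finset.Ico m j, max (w j k) 0 := by
    simp only [Finset.range_eq_Ico]
    rw [← Finset.sum_Ico_consecutive _ (Nat.zero_le m) hmj]
  rw [hsplit]
  simp only [hsym]
  ring

/-! ### Main theorem -/

/-- Correctness of the dynamic programming recurrence for optimal consecutive
clustering with a symmetric weight function. -/
theorem dp_recurrence_correct (w : ℕ → ℕ → ℝ) (hw : ∀ a b, w a b = w b a) (j i : ℕ)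
    (hj : 1 ≤ j) (hij : i ≤ j) :
    opt' w j 0 = opt w (j - 1) + ∑ k ∈ Finset.range j, max (w j k) 0 ∧
    (0 < i →
      opt' w j i = opt' w (j - 1) (i - 1) + ∑ k ∈ Finset.range j, max (w j k) 0
        - ∑ k ∈ Finset.Ico (j - i) j, max (w j k) 0
        + ∑ k ∈ Finset.Ico (j - i) j, max (-w j k) 0) ∧
    opt w j = (Finset.range (j + 1)).inf' Finset.nonempty_range_add_one (fun i => opt' w j i) := by
  refine ⟨?_, ?_, ?_⟩
  · -- part 1
    unfold opt opt'
    rw [Nat.sub_zero, Nat.sub_add_cancel hj, setA w hj,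
      sInf_add_const (nonempty_consec.image _) (bddBelow_pcost w _ _)]
    congr 1
    apply Finset.sum_congr rfl
    intro k hk
    rw [mem_range] at hk
    rw [if_neg (by omega), hw k j]
  · -- part 2
    intro hi0
    unfold opt'
    have h1 : j - 1 + 1 = j := Nat.sub_add_cancel hj
    have h2 : j - 1 - (i - 1) = j - i := by omega
    have hmj : j - i < j := by omega
    rw [h1, h2, setB w hmj,
      sInf_add_const ((nonempty_consec_with' hmj).image _) (bddBelow_pcost w _ _),
      sum_split w hw (le_of_lt hmj)]
    ring
  · -- part 3
    apply le_antisymm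
    · apply Finset.le_inf'
      intro k hk
      rw [mem_range] at hk
      unfold opt opt'
      exact csInf_le_csInf (bddBelow_pcost w _ _)
        ((nonempty_consec_with (by omega : j - k ≤ j)).image _)
        (Set.image_mono fun P hP => hP.1)
    · unfold opt
      apply le_csInf (nonempty_consec.image _)
      rintro x ⟨P, hPc, rfl⟩
      obtain ⟨t, ht, hjt⟩ := P.exists_mem (mem_range.2 (by omega : j < j + 1))
      have htne : t.Nonempty := ⟨j, hjt⟩
      set a := t.min' htne with ha
      have hat : a ∈ t := t.min'_mem htne
      have hsub : t ⊆ range (j + 1) := Finset.le_iff_subset.1 (P.le ht)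
      have haj : a ≤ j := by
        have h' := mem_range.1 (hsub hat)
        omega
      have hteq : t = Finset.Icc a j := by
        ext x
        simp only [Finset.mem_Icc]
        constructor
        · intro hx
          refine ⟨t.min'_le x hx, ?_⟩
          have := mem_range.1 (hsub hx)
          omega
        · rintro ⟨h1', h2'⟩
          exact hPc t ht a hat j hjt x h1' h2'
      have hkey : j - (j - a) = a := by omega
      calc (range (j + 1)).inf' Finset.nonempty_range_add_one (fun i => opt' w j i)
          ≤ opt' w j (j - a) := Finset.inf'_le _ (mem_range.2 (by omega))
        _ ≤ pcost w (range (j + 1)) P := by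
            unfold opt'
            apply csInf_le (bddBelow_pcost w _ _)
            exact ⟨P, ⟨hPc, by rw [hkey, ← hteq]; exact ht⟩, rfl⟩
end

section
/- In the unweighted 1D point graph setting, the dynamic programming recurrence opt'(j,i) = opt'(j-1,i-1) + |i - deg⁺(v_j)| holds for 0 < i ≤ j, and opt'(j,0) = opt(j-1) + deg⁺(v_j), where deg⁺(v_j) is the number of neighbors of v_j among vertices 0,...,j-1. -/
open Finset

/-- Unweighted point-graph weights: `1` on edges, `-1` on non-edges. -/
noncomputable def wPt (x : ℕ → ℝ) (l : ℝ) (a b : ℕ) : ℝ :=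
  if |x a - x b| ≤ l then 1 else -1

/-- Number of neighbours of `v_j` among vertices `0,…,j-1`. -/
noncomputable def degPlus (x : ℕ → ℝ) (l : ℝ) (j : ℕ) : ℕ :=
  ((Finset.range j).filter fun k => |x k - x j| ≤ l).card

/-! ### Auxiliary machinery -/

section Aux

/-- Remove a part from a finpartition. -/
def Finpartition.chop {s : Finset ℕ} (P : Finpartition s) {t : Finset ℕ} (ht : t ∈ P.parts) :
    Finpartition (s \ t) where
  parts := P.parts.erase t
  supIndep := P.supIndep.subset (erase_subset _ _)
  sup_parts := by
    apply le_antisymm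
    · refine Finset.sup_le fun u hu => ?_
      have hu' := Finset.mem_of_mem_erase hu
      intro y hy
      rw [Finset.mem_sdiff]
      refine ⟨P.le hu' hy, fun hyt => ?_⟩
      exact Finset.disjoint_left.1 (P.disjoint hu' ht (Finset.ne_of_mem_erase hu)) hy hyt
    · intro y hy
      rw [Finset.mem_sdiff] at hy
      obtain ⟨u, hu, hyu⟩ := P.exists_mem hy.1
      have hut : u ≠ t := fun h => hy.2 (h ▸ hyu)
      exact Finset.le_sup (f := id) (Finset.mem_erase.2 ⟨hut, hu⟩) hyu
  bot_notMem h := P.bot_notMem (Finset.mem_of_mem_erase h)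

@[simp] lemma Finpartition.chop_parts {s : Finset ℕ} (P : Finpartition s) {t : Finset ℕ}
    (ht : t ∈ P.parts) : (P.chop ht).parts = P.parts.erase t := rfl

lemma range_filter_lt {b n : ℕ} (h : b ≤ n) : (range n).filter (· < b) = range b := by
  ext a; simp only [mem_filter, mem_range]; omega

lemma pcost_eq (w : ℕ → ℕ → ℝ) (n : ℕ) (P : Finpartition (range n)) :
    pcost w (range n) P = ∑ b ∈ range n, ∑ a ∈ range b,
      if samePartN P a b then max (-w a b) 0 else max (w a b) 0 := by
  unfold pcost
  refine Finset.sum_congr rfl fun b hb => ?_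
  rw [range_filter_lt (le_of_lt (mem_range.1 hb))]

lemma pcost_insert (w : ℕ → ℕ → ℝ) {k n : ℕ} (hkn : k < n)
    (S : Finpartition (range k)) (P : Finpartition (range n))
    (hP : P.parts = insert (Finset.Icc k (n - 1)) S.parts) :
    pcost w (range n) P = pcost w (range k) S
      + ∑ b ∈ Finset.Ico k n, ∑ a ∈ range b,
          (if k ≤ a then max (-w a b) 0 else max (w a b) 0) := by
  have hSlt : ∀ u ∈ S.parts, ∀ a ∈ u, a < k := fun u hu a ha => mem_range.1 (S.le hu ha)
  have hsame1 : ∀ a b : ℕ, a < k → b < k → (samePartN P a b ↔ samePartN S a b) := by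
    intro a b ha hb
    constructor
    · rintro ⟨t, ht, hat, hbt⟩
      rw [hP, mem_insert] at ht
      rcases ht with rfl | ht
      · exact absurd (mem_Icc.1 hbt).1 (by omega)
      · exact ⟨t, ht, hat, hbt⟩
    · rintro ⟨t, ht, hat, hbt⟩
      exact ⟨t, by rw [hP]; exact mem_insert_of_mem ht, hat, hbt⟩
  have hsame2 : ∀ a b : ℕ, a < b → k ≤ b → b < n → (samePartN P a b ↔ k ≤ a) := by
    intro a b hab hkb hbn
    constructor
    · rintro ⟨t, ht, hat, hbt⟩
      rw [hP, mem_insert] at ht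
      rcases ht with rfl | ht
      · exact (mem_Icc.1 hat).1
      · exact absurd (hSlt t ht b hbt) (by omega)
    · intro hka
      exact ⟨Finset.Icc k (n - 1), by rw [hP]; exact mem_insert_self _ _,
        mem_Icc.2 ⟨hka, by omega⟩, mem_Icc.2 ⟨hkb, by omega⟩⟩
  have key : ∀ f : ℕ → ℝ, ∑ b ∈ range n, f b = ∑ b ∈ range k, f b + ∑ b ∈ Ico k n, f b := by
    intro f
    rw [range_eq_Ico, ← Finset.sum_Ico_consecutive f (Nat.zero_le k) hkn.le]
    rw [← range_eq_Ico]
  rw [pcost_eq, pcost_eq, key]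
  congr 1
  · refine Finset.sum_congr rfl fun b hb => Finset.sum_congr rfl fun a ha => ?_
    exact if_congr (hsame1 a b (lt_trans (mem_range.1 ha) (mem_range.1 hb)) (mem_range.1 hb)) rfl rfl
  · refine Finset.sum_congr rfl fun b hb => Finset.sum_congr rfl fun a ha => ?_
    exact if_congr (hsame2 a b (mem_range.1 ha) (mem_Ico.1 hb).1 (mem_Ico.1 hb).2) rfl rfl

lemma upclosed_eq_Ico {j : ℕ} {S : Finset ℕ} (hS : S ⊆ range j)
    (hup : ∀ a ∈ S, ∀ b, a ≤ b → b < j → b ∈ S) :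
    S = Finset.Ico (j - S.card) j := by
  rcases S.eq_empty_or_nonempty with rfl | hne
  · simp
  · have hm := S.min'_mem hne
    have hmj : S.min' hne < j := mem_range.1 (hS hm)
    have hSeq : S = Finset.Ico (S.min' hne) j := by
      ext a
      simp only [mem_Ico]
      constructor
      · exact fun ha => ⟨S.min'_le a ha, mem_range.1 (hS ha)⟩
      · exact fun ha => hup _ hm a ha.1 ha.2
    have hcard : S.card = j - S.min' hne := by
      have h2 : (Finset.Ico (S.min' hne) j).card = j - S.min' hne := Nat.card_Ico _ _
      rw [← hSeq] at h2
      exact h2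
    rw [hcard, show j - (j - S.min' hne) = S.min' hne from by omega]
    exact hSeq

lemma neighbors_eq_Ico (x : ℕ → ℝ) (hx : Monotone x) (l : ℝ) (j : ℕ) :
    ((Finset.range j).filter fun k => |x k - x j| ≤ l)
      = Finset.Ico (j - degPlus x l j) j := by
  apply upclosed_eq_Ico (filter_subset _ _)
  intro a ha b hab hbj
  simp only [mem_filter, mem_range] at ha ⊢
  refine ⟨hbj, ?_⟩
  have h1 : x a ≤ x j := hx (by omega)
  have h2 : x b ≤ x j := hx (by omega)
  have h3 : x a ≤ x b := hx hab
  have := ha.2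
  rw [abs_sub_comm, abs_of_nonneg (by linarith)] at this ⊢
  linarith

lemma degPlus_le (x : ℕ → ℝ) (l : ℝ) (j : ℕ) : degPlus x l j ≤ j := by
  unfold degPlus
  exact le_trans (card_filter_le _ _) (by simp)

lemma col_sum (x : ℕ → ℝ) (hx : Monotone x) (l : ℝ) {i j : ℕ} (hij : i ≤ j) :
    ∑ a ∈ range j, (if j - i ≤ a then max (-(wPt x l a j)) 0 else max (wPt x l a j) 0)
      = |(i : ℝ) - (degPlus x l j : ℝ)| := by
  set d := degPlus x l j with hd
  have hdj : d ≤ j := degPlus_le x l j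
  have hedge : ∀ a ∈ range j, (|x a - x j| ≤ l ↔ j - d ≤ a) := by
    intro a ha
    constructor
    · intro h
      have : a ∈ Finset.Ico (j - d) j := by
        rw [← neighbors_eq_Ico x hx l j]
        exact mem_filter.2 ⟨ha, h⟩
      exact (mem_Ico.1 this).1
    · intro h
      have : a ∈ (range j).filter fun k => |x k - x j| ≤ l := by
        rw [neighbors_eq_Ico x hx l j]
        exact mem_Ico.2 ⟨h, mem_range.1 ha⟩
      exact (mem_filter.1 this).2
  rcases le_total i d with hid | hid
  · have hsum : ∀ a ∈ range j,
        (if j - i ≤ a then max (-(wPt x l a j)) 0 else max (wPt x l a j) 0)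
          = if j - d ≤ a ∧ a < j - i then (1 : ℝ) else 0 := by
      intro a ha
      have he := hedge a ha
      unfold wPt
      rcases le_or_gt (j - d) a with h2 | h2
      · rcases le_or_gt (j - i) a with h1 | h1
        · rw [if_pos h1, if_pos (he.mpr h2),
            if_neg (by omega : ¬(j - d ≤ a ∧ a < j - i))]
          norm_num
        · rw [if_neg (by omega : ¬ j - i ≤ a), if_pos (he.mpr h2), if_pos ⟨h2, h1⟩]
          norm_num
      · have h1 : ¬ j - i ≤ a := by omega
        rw [if_neg h1, if_neg (fun h => absurd (he.mp h) (by omega)),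
          if_neg (by omega : ¬(j - d ≤ a ∧ a < j - i))]
        norm_num
    rw [Finset.sum_congr rfl hsum, Finset.sum_boole]
    have hfil : (range j).filter (fun a => j - d ≤ a ∧ a < j - i)
        = Finset.Ico (j - d) (j - i) := by
      ext a; simp only [mem_filter, mem_range, mem_Ico]; omega
    rw [hfil, Nat.card_Ico,
      abs_sub_comm, abs_of_nonneg (sub_nonneg.2 (Nat.cast_le.2 hid)),
      show j - i - (j - d) = d - i from by omega, Nat.cast_sub hid]
  · have hsum : ∀ a ∈ range j,
        (if j - i ≤ a then max (-(wPt x l a j)) 0 else max (wPt x l a j) 0)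
          = if j - i ≤ a ∧ a < j - d then (1 : ℝ) else 0 := by
      intro a ha
      have he := hedge a ha
      unfold wPt
      rcases le_or_gt (j - i) a with h1 | h1
      · rcases le_or_gt (j - d) a with h2 | h2
        · rw [if_pos h1, if_pos (he.mpr h2),
            if_neg (by omega : ¬(j - i ≤ a ∧ a < j - d))]
          norm_num
        · rw [if_pos h1, if_neg (fun h => absurd (he.mp h) (by omega)), if_pos ⟨h1, h2⟩]
          norm_num
      · have h2 : ¬ j - d ≤ a := by omega
        rw [if_neg (by omega : ¬ j - i ≤ a), if_neg (fun h => absurd (he.mp h) (by omega)),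
          if_neg (by omega : ¬(j - i ≤ a ∧ a < j - d))]
        norm_num
    rw [Finset.sum_congr rfl hsum, Finset.sum_boole]
    have hfil : (range j).filter (fun a => j - i ≤ a ∧ a < j - d)
        = Finset.Ico (j - i) (j - d) := by
      ext a; simp only [mem_filter, mem_range, mem_Ico]; omega
    rw [hfil, Nat.card_Ico,
      abs_of_nonneg (sub_nonneg.2 (Nat.cast_le.2 hid)),
      show j - d - (j - i) = i - d from by omega, Nat.cast_sub hid]

/-- Consecutiveness of a family of parts. -/
def ConsecOn (ps : Finset (Finset ℕ)) : Prop :=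
  ∀ t ∈ ps, ∀ a ∈ t, ∀ b ∈ t, ∀ c, a ≤ c → c ≤ b → c ∈ t

lemma consecOn_mono {ps qs : Finset (Finset ℕ)} (h : ps ⊆ qs) (hq : ConsecOn qs) :
    ConsecOn ps := fun t ht => hq t (h ht)

lemma consecOn_insert_Icc {u v : ℕ} {ps : Finset (Finset ℕ)} (hp : ConsecOn ps) :
    ConsecOn (insert (Finset.Icc u v) ps) := by
  intro t ht a ha b hb c hac hcb
  rcases mem_insert.1 ht with rfl | ht
  · rw [mem_Icc] at ha hb ⊢
    omega
  · exact hp t ht a ha b hb c hac hcb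

lemma isConsec_iff {s : Finset ℕ} (P : Finpartition s) :
    IsConsecPartition P ↔ ConsecOn P.parts := Iff.rfl

lemma consecOn_bot (k : ℕ) : ConsecOn ((⊥ : Finpartition (range k)).parts) := by
  intro t ht a ha b hb c hac hcb
  rw [Finpartition.parts_bot, Finset.mem_map] at ht
  obtain ⟨m, _, rfl⟩ := ht
  simp only [Function.Embedding.coeFn_mk, mem_singleton] at ha hb ⊢
  omega

/-- The standard consecutive partition of `range n`: singletons below `k` and a
last part `Icc k (n-1)`. -/
def stdP (k n : ℕ) (h : k < n) : Finpartition (range n) :=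
  (⊥ : Finpartition (range k)).extend (b := Finset.Icc k (n - 1))
    (by
      rw [Finset.bot_eq_empty]
      exact (Finset.nonempty_Icc.2 (by omega)).ne_empty)
    (by
      rw [Finset.disjoint_left]
      intro a h1 h2
      rw [mem_range] at h1
      rw [mem_Icc] at h2
      omega)
    (by
      rw [sup_eq_union]
      ext a
      simp only [mem_union, mem_range, mem_Icc]
      omega)

lemma stdP_parts (k n : ℕ) (h : k < n) :
    (stdP k n h).parts = insert (Finset.Icc k (n - 1)) (⊥ : Finpartition (range k)).parts := rfl

lemma stdP_consec (k n : ℕ) (h : k < n) : IsConsecPartition (stdP k n h) := by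
  rw [isConsec_iff, stdP_parts]
  exact consecOn_insert_Icc (consecOn_bot k)

lemma sInf_corr {A B : Set ℝ} {c : ℝ} (hB : B.Nonempty)
    (hA0 : ∀ a ∈ A, (0:ℝ) ≤ a) (hB0 : ∀ b ∈ B, (0:ℝ) ≤ b)
    (h1 : ∀ a ∈ A, ∃ b ∈ B, a = b + c) (h2 : ∀ b ∈ B, b + c ∈ A) :
    sInf A = sInf B + c := by
  obtain ⟨b0, hb0⟩ := hB
  have hA : A.Nonempty := ⟨b0 + c, h2 b0 hb0⟩
  have bddA : BddBelow A := ⟨0, fun a ha => hA0 a ha⟩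
  have bddB : BddBelow B := ⟨0, fun b hb => hB0 b hb⟩
  apply le_antisymm
  · have hle : ∀ b ∈ B, sInf A ≤ b + c := fun b hb => csInf_le bddA (h2 b hb)
    have h3 : sInf A - c ≤ sInf B :=
      le_csInf ⟨b0, hb0⟩ (fun b hb => by linarith [hle b hb])
    linarith
  · refine le_csInf hA fun a ha => ?_
    obtain ⟨b, hb, rfl⟩ := h1 a ha
    linarith [csInf_le bddB hb]

end Aux

/-- The unweighted 1D dynamic programming recurrence:
`opt'(j,0) = opt(j-1) + deg⁺(v_j)` and `opt'(j,i) = opt'(j-1,i-1) + |i - deg⁺(v_j)|`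
for `0 < i ≤ j`. -/
theorem dp_recurrence_unweighted (x : ℕ → ℝ) (hx : Monotone x) (l : ℝ) (hl : 0 ≤ l)
    (j i : ℕ) (hj : 1 ≤ j) (hij : i ≤ j) :
    opt' (wPt x l) j 0 = opt (wPt x l) (j - 1) + (degPlus x l j : ℝ) ∧
    (0 < i →
      opt' (wPt x l) j i
        = opt' (wPt x l) (j - 1) (i - 1) + |(i : ℝ) - (degPlus x l j : ℝ)|) := by
  set w := wPt x l with hw
  set d := degPlus x l j with hd
  have hdj : d ≤ j := degPlus_le x l j
  -- cost lemma: `i' = 0` variant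
  have cost_key0 : ∀ (Q : Finpartition (range j)) (P : Finpartition (range (j + 1))),
      P.parts = insert (Finset.Icc j j) Q.parts →
      pcost w (range (j + 1)) P = pcost w (range j) Q + (d : ℝ) := by
    intro Q P hP
    have e1 := pcost_insert w (Nat.lt_succ_self j) Q P (by simpa using hP)
    rw [e1, Finset.sum_Ico_succ_top (le_refl j), Finset.Ico_self, Finset.sum_empty, zero_add]
    have hcs := col_sum x hx l (i := 0) (j := j) (Nat.zero_le j)
    simp only [Nat.sub_zero, Nat.cast_zero, zero_sub, abs_neg, Nat.abs_cast, ← hd] at hcs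
    rw [hcs]
  -- cost lemma: `0 < i'` variant
  have cost_key : ∀ i' : ℕ, 0 < i' → i' ≤ j →
      ∀ (S : Finpartition (range (j - i'))) (P : Finpartition (range (j + 1)))
        (Q : Finpartition (range j)),
        P.parts = insert (Finset.Icc (j - i') j) S.parts →
        Q.parts = insert (Finset.Icc (j - i') (j - 1)) S.parts →
        pcost w (range (j + 1)) P = pcost w (range j) Q + |(i' : ℝ) - (d : ℝ)| := by
    intro i' hi' hi'j S P Q hP hQ
    have e1 := pcost_insert w (show j - i' < j + 1 from by omega) S P (by simpa using hP)
    have e2 := pcost_insert w (show j - i' < j from by omega) S Q hQ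
    rw [e1, e2, Finset.sum_Ico_succ_top (show j - i' ≤ j from by omega)]
    have hcs := col_sum x hx l (i := i') (j := j) hi'j
    rw [← hw, ← hd] at hcs
    rw [hcs]
    ring
  constructor
  · -- the `i = 0` recurrence
    simp only [opt', opt, Nat.sub_zero]
    rw [show j - 1 + 1 = j from by omega]
    apply sInf_corr
    · exact ⟨_, Set.mem_image_of_mem _ (stdP_consec 0 j hj)⟩
    · rintro a ⟨P, _, rfl⟩; exact pcost_nonneg _ _ _
    · rintro b ⟨Q, _, rfl⟩; exact pcost_nonneg _ _ _
    · rintro a ⟨P, ⟨hPc, hPt⟩, rfl⟩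
      have e0 : range (j + 1) \ Finset.Icc j j = range j := by
        ext a; simp only [Finset.mem_sdiff, mem_range, mem_Icc]; omega
      set Q := (P.chop hPt).copy e0 with hQdef
      have hQparts : Q.parts = P.parts.erase (Finset.Icc j j) := rfl
      have hPQ : P.parts = insert (Finset.Icc j j) Q.parts := by
        rw [hQparts, Finset.insert_erase hPt]
      refine ⟨pcost w (range j) Q, ⟨Q, ?_, rfl⟩, cost_key0 Q P hPQ⟩
      rw [Set.mem_setOf_eq, isConsec_iff, hQparts]
      exact consecOn_mono (Finset.erase_subset _ _) hPc
    · rintro b ⟨Q, hQc, rfl⟩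
      refine ⟨Q.extend (b := Finset.Icc j j)
        (by rw [Finset.bot_eq_empty]; exact (Finset.nonempty_Icc.2 (le_refl j)).ne_empty)
        (by rw [Finset.disjoint_left]
            intro a h1 h2
            rw [mem_range] at h1
            rw [mem_Icc] at h2
            omega)
        (show range j ⊔ Finset.Icc j j = range (j + 1) from by
          rw [sup_eq_union]
          ext a
          simp only [mem_union, mem_range, mem_Icc]
          omega), ⟨?_, ?_⟩, ?_⟩
      · rw [isConsec_iff, Finpartition.extend_parts]
        exact consecOn_insert_Icc hQc
      · rw [Finpartition.extend_parts]
        exact mem_insert_self _ _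
      · exact cost_key0 Q _ (Finpartition.extend_parts _ _ _ _)
  · -- the `0 < i` recurrence
    intro hi
    simp only [opt']
    rw [show j - 1 + 1 = j from by omega, show j - 1 - (i - 1) = j - i from by omega]
    apply sInf_corr
    · have hk : j - i < j := by omega
      refine ⟨pcost w (range j) (stdP (j - i) j hk),
        ⟨stdP (j - i) j hk, ⟨stdP_consec _ _ hk, ?_⟩, rfl⟩⟩
      rw [stdP_parts]
      exact mem_insert_self _ _
    · rintro a ⟨P, _, rfl⟩; exact pcost_nonneg _ _ _
    · rintro b ⟨Q, _, rfl⟩; exact pcost_nonneg _ _ _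
    · rintro a ⟨P, ⟨hPc, hPt⟩, rfl⟩
      have e0 : range (j + 1) \ Finset.Icc (j - i) j = range (j - i) := by
        ext a; simp only [Finset.mem_sdiff, mem_range, mem_Icc]; omega
      set S := (P.chop hPt).copy e0 with hSdef
      have hSparts : S.parts = P.parts.erase (Finset.Icc (j - i) j) := rfl
      have hPS : P.parts = insert (Finset.Icc (j - i) j) S.parts := by
        rw [hSparts, Finset.insert_erase hPt]
      set Q := S.extend (b := Finset.Icc (j - i) (j - 1))
        (by rw [Finset.bot_eq_empty]; exact (Finset.nonempty_Icc.2 (by omega)).ne_empty)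
        (by rw [Finset.disjoint_left]
            intro a h1 h2
            rw [mem_range] at h1
            rw [mem_Icc] at h2
            omega)
        (show range (j - i) ⊔ Finset.Icc (j - i) (j - 1) = range j from by
          rw [sup_eq_union]
          ext a
          simp only [mem_union, mem_range, mem_Icc]
          omega) with hQdef
      have hQparts : Q.parts = insert (Finset.Icc (j - i) (j - 1)) S.parts :=
        Finpartition.extend_parts _ _ _ _
      refine ⟨pcost w (range j) Q, ⟨Q, ⟨?_, ?_⟩, rfl⟩, cost_key i hi hij S P Q hPS hQparts⟩
      · rw [isConsec_iff, hQparts]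
        refine consecOn_insert_Icc ?_
        rw [hSparts]
        exact consecOn_mono (Finset.erase_subset _ _) hPc
      · rw [hQparts]
        exact mem_insert_self _ _
    · rintro b ⟨Q, ⟨hQc, hQt⟩, rfl⟩
      have e0 : range j \ Finset.Icc (j - i) (j - 1) = range (j - i) := by
        ext a; simp only [Finset.mem_sdiff, mem_range, mem_Icc]; omega
      set S := (Q.chop hQt).copy e0 with hSdef
      have hSparts : S.parts = Q.parts.erase (Finset.Icc (j - i) (j - 1)) := rfl
      have hQS : Q.parts = insert (Finset.Icc (j - i) (j - 1)) S.parts := by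
        rw [hSparts, Finset.insert_erase hQt]
      set P := S.extend (b := Finset.Icc (j - i) j)
        (by rw [Finset.bot_eq_empty]; exact (Finset.nonempty_Icc.2 (by omega)).ne_empty)
        (by rw [Finset.disjoint_left]
            intro a h1 h2
            rw [mem_range] at h1
            rw [mem_Icc] at h2
            omega)
        (show range (j - i) ⊔ Finset.Icc (j - i) j = range (j + 1) from by
          rw [sup_eq_union]
          ext a
          simp only [mem_union, mem_range, mem_Icc]
          omega) with hPdef
      have hPparts : P.parts = insert (Finset.Icc (j - i) j) S.parts :=
        Finpartition.extend_parts _ _ _ _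
      refine ⟨P, ⟨?_, ?_⟩, cost_key i hi hij S P Q hPparts hQS⟩
      · rw [isConsec_iff, hPparts]
        refine consecOn_insert_Icc ?_
        rw [hSparts]
        exact consecOn_mono (Finset.erase_subset _ _) hQc
      · rw [hPparts]
        exact mem_insert_self _ _
end
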